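/- For x ∈ Q(t), a unit vector u with ⟨∇_x g_i(t,x), u⟩ ≥ ν for all i ∈ I_ρ(t,x), and h < ρ/(β+ν), every constraint satisfies g_i(t, x + h u) ≥ h ν. -/
import Mathlib

open scoped RealInnerProductSpace

lemma convex_gradient_ineq {d : ℕ} {g : EuclideanSpace ℝ (Fin d) → ℝ}
    {G x : EuclideanSpace ℝ (Fin d)}
    (hconv : ConvexOn ℝ Set.univ g) (hgrad : HasGradientAt g G x)
    (v : EuclideanSpace ℝ (Fin d)) :
    g x + ⟪G, v⟫ ≤ g (x + v) := by
  have hline : HasLineDerivAt ℝ g ⟪G, v⟫ x v := by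
    have := hgrad.hasFDerivAt.hasLineDerivAt v
    simpa using this
  have htend := hline.tendsto_slope_zero_right
  have hbound : ∀ᶠ t : ℝ in nhdsWithin 0 (Set.Ioi 0),
      t⁻¹ • (g (x + t • v) - g x) ≤ g (x + v) - g x := by
    filter_upwards [Ioc_mem_nhdsGT_of_mem (by norm_num : (0:ℝ) ∈ Set.Ico 0 1)] with t ht
    have ht0 : 0 < t := ht.1
    have ht1 : t ≤ 1 := ht.2
    have hcvx := hconv.2 (Set.mem_univ x) (Set.mem_univ (x + v))
      (show (0:ℝ) ≤ 1 - t by linarith) (le_of_lt ht0) (by ring)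
    have heq : (1 - t) • x + t • (x + v) = x + t • v := by
      module
    rw [heq] at hcvx
    simp only [smul_eq_mul] at hcvx
    have : g (x + t • v) - g x ≤ t * (g (x + v) - g x) := by nlinarith
    rw [smul_eq_mul, inv_mul_le_iff₀ ht0]
    linarith [mul_comm t (g (x + v) - g x)]
  have := le_of_tendsto htend hbound
  linarith

/-- Moving a feasible point by h in the good direction u makes every constraint at least hν,
provided h < ρ/(β+ν). -/
theorem good_direction_step {d p : ℕ} (ρ β ν h : ℝ)
    (hρ : 0 < ρ) (hβ : 0 < β) (hν : 0 < ν) (hh0 : 0 ≤ h) (hh : h < ρ / (β + ν))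
    (g : Fin p → EuclideanSpace ℝ (Fin d) → ℝ)
    (G : Fin p → EuclideanSpace ℝ (Fin d))
    (x u : EuclideanSpace ℝ (Fin d)) (hu : ‖u‖ = 1)
    (hconv : ∀ i, ConvexOn ℝ Set.univ (g i))
    (hgrad : ∀ i, HasGradientAt (g i) (G i) x)
    (hGb : ∀ i, ‖G i‖ ≤ β)
    (hx : ∀ i, 0 ≤ g i x)
    (hgood : ∀ i, g i x ≤ ρ → ν ≤ ⟪G i, u⟫) :
    ∀ i, h * ν ≤ g i (x + h • u) := by
  intro i
  have key := convex_gradient_ineq (hconv i) (hgrad i) (h • u)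
  have hinner : ⟪G i, h • u⟫ = h * ⟪G i, u⟫ := real_inner_smul_right _ _ _
  rw [hinner] at key
  by_cases hcase : g i x ≤ ρ
  · have := hgood i hcase
    have h1 : h * ν ≤ h * ⟪G i, u⟫ := mul_le_mul_of_nonneg_left this hh0
    have := hx i
    linarith
  · push_neg at hcase
    have hCS : |⟪G i, u⟫| ≤ ‖G i‖ * ‖u‖ := abs_real_inner_le_norm _ _
    rw [hu, mul_one] at hCS
    have hlow : -β ≤ ⟪G i, u⟫ := by
      have := hGb i
      cases' abs_le.mp hCS with h1 h2
      linarith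
    have hhb : h * (β + ν) < ρ := (lt_div_iff₀ (by linarith)).mp hh
    nlinarith [mul_le_mul_of_nonneg_left hlow hh0]
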